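/- Let c be an exclusive cycle in E and v ∈ c⁰. The module N_c^v over L_K(E) is graded simple: every nonzero graded submodule of N_c^v equals N_c^v. -/

import Mathlib

/-- A directed graph with vertex set `V`, edge set `E`, source map `s` and range map `r`. -/
structure DiGraph where
  V : Type
  E : Type
  s : E → V
  r : E → V

namespace DiGraph

variable (G : DiGraph)

/-- There is an edge from `u` to `w`. -/
def Step (u w : G.V) : Prop := ∃ e : G.E, G.s e = u ∧ G.r e = w

/-- `G.Reach u w` means `u ≥ w`: there is a (possibly trivial) directed path from `u` to `w`. -/
def Reach (u w : G.V) : Prop := Relation.ReflTransGen G.Step u w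

/-- The root `R(W)` of a set of vertices `W`. -/
def root (W : Set G.V) : Set G.V := {u | ∃ w ∈ W, G.Reach u w}

/-- A set `H` of vertices is hereditary if `u ∈ H` and `u ≥ w` imply `w ∈ H`. -/
def Hereditary (H : Set G.V) : Prop := ∀ u ∈ H, ∀ w, G.Reach u w → w ∈ H

/-- A vertex is regular if it emits at least one and only finitely many edges. -/
def Regular (v : G.V) : Prop := (G.s ⁻¹' {v}).Nonempty ∧ (G.s ⁻¹' {v}).Finite

/-- A set `H` is saturated if every regular vertex all of whose out-edges
have ranges in `H` lies in `H`. -/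
def Saturated (H : Set G.V) : Prop :=
  ∀ v, G.Regular v → (∀ e, G.s e = v → G.r e ∈ H) → v ∈ H

/-- A set of vertices is downwards directed if every two of its elements have a
common lower bound in it. -/
def DownDirected (W : Set G.V) : Prop :=
  ∀ u ∈ W, ∀ v ∈ W, ∃ w ∈ W, G.Reach u w ∧ G.Reach v w

/-- The Countable Separation Property of a set of vertices. -/
def CSP (W : Set G.V) : Prop := ∃ C : Set G.V, C.Countable ∧ W ⊆ G.root C

/-- The Inner Countable Separation Property of a set of vertices. -/
def ICSP (W : Set G.V) : Prop := ∃ C : Set G.V, C.Countable ∧ C ⊆ W ∧ W ⊆ G.root C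

/-- `G.IsPathFrom v l` : the list of edges `l` forms a directed path starting at `v`. -/
def IsPathFrom : (G : DiGraph) → G.V → List G.E → Prop
  | _, _, [] => True
  | G, v, e :: es => G.s e = v ∧ G.IsPathFrom (G.r e) es

/-- The end (range) vertex of a path `l` starting at `v`. -/
def pathEnd : (G : DiGraph) → G.V → List G.E → G.V
  | _, v, [] => v
  | G, _, e :: es => G.pathEnd (G.r e) es

/-- The set of vertices on a path `l` starting at `v`. -/
def pathVerts (v : G.V) (l : List G.E) : Set G.V := insert v {w | ∃ e ∈ l, G.r e = w}

/-- A cycle based at `v` : a nonempty closed path in which distinct edges have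
distinct sources. -/
def IsCycle (v : G.V) (l : List G.E) : Prop :=
  l ≠ [] ∧ G.IsPathFrom v l ∧ G.pathEnd v l = v ∧ (l.map G.s).Nodup

/-- A cycle is exclusive if no vertex on it is the base of a cycle distinct from it
(cycles being identified with their sets of edges). -/
def ExclusiveCycle (v : G.V) (l : List G.E) : Prop :=
  G.IsCycle v l ∧ ∀ u ∈ G.pathVerts v l, ∀ m, G.IsCycle u m → (∀ e, e ∈ m ↔ e ∈ l)

open Classical in
/-- Auxiliary reduction on reversed edge lists: cancel common initial segments. -/
noncomputable def redAux (G : DiGraph) : List G.E → List G.E → List G.E × List G.E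
  | a :: as, b :: bs => if a = b then redAux G as bs else (a :: as, b :: bs)
  | as, bs => (as, bs)

/-- The reduction function: `red (p, q)` cancels the common final edges of the
paths `p` and `q`, implementing `red(ee*q*) = q*` and `red(pee*q*) = red(pq*)`. -/
noncomputable def red (p q : List G.E) : List G.E × List G.E :=
  ((G.redAux p.reverse q.reverse).1.reverse, (G.redAux p.reverse q.reverse).2.reverse)

/-- The source vertex of an element `pq*` (with `q` a path starting at the base
vertex `v`): the source of `p` if `p` is nonempty, and `r(q)` otherwise. -/
def startVtx (v : G.V) : List G.E × List G.E → G.V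
  | ([], q) => G.pathEnd v q
  | (e :: _, _) => G.s e

/-- Membership in the set `Y` associated to a cycle `c` (based at `cv`, with edges
`cl`) and a vertex `v ∈ c⁰`: pairs `(p, q)` of paths with `r(p) = r(q) ∈ c⁰` and
`s(q) = v`. -/
def MemY (cv : G.V) (cl : List G.E) (v : G.V) (x : List G.E × List G.E) : Prop :=
  G.IsPathFrom (G.startVtx v x) x.1 ∧ G.IsPathFrom v x.2 ∧
    G.pathEnd (G.startVtx v x) x.1 = G.pathEnd v x.2 ∧
    G.pathEnd v x.2 ∈ G.pathVerts cv cl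

/-- The degree `|p| − |q|` of an element `pq*`. -/
def degOf (G : DiGraph) (x : List G.E × List G.E) : ℤ :=
  (x.1.length : ℤ) - (x.2.length : ℤ)

/-- The branching system `X`: reduced elements of `Y`. -/
def Xset (cv : G.V) (cl : List G.E) (v : G.V) : Set (List G.E × List G.E) :=
  {x | G.MemY cv cl v x ∧ G.red x.1 x.2 = x}

/-- The subset `X_w` of `X` of elements with source vertex `w`. -/
def Xvtx (cv : G.V) (cl : List G.E) (v : G.V) (w : G.V) : Set (List G.E × List G.E) :=
  {x ∈ G.Xset cv cl v | G.startVtx v x = w}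

/-- The subset `X_e` of `X` of elements of the form `red(e r s*)` with `e r s* ∈ Y`. -/
def Xedge (cv : G.V) (cl : List G.E) (v : G.V) (e : G.E) : Set (List G.E × List G.E) :=
  {x | ∃ rs : List G.E × List G.E, G.MemY cv cl v (e :: rs.1, rs.2) ∧
    x = G.red (e :: rs.1) rs.2}

/-- The map `σ_e : X_{r(e)} → X_e`, `pq* ↦ red(e p q*)`. -/
noncomputable def sigmaE (e : G.E) (x : List G.E × List G.E) : List G.E × List G.E :=
  G.red (e :: x.1) x.2

end DiGraph

noncomputable section
open Classical

variable (K : Type) [Field K] (G : DiGraph)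

/-- Generators of the Leavitt path algebra: vertices, edges and ghost edges. -/
abbrev LVGen (G : DiGraph) : Type := G.V ⊕ G.E ⊕ G.E

/-- The free algebra on the generators. -/
abbrev LFree : Type := FreeAlgebra K (LVGen G)

/-- Vertex generator. -/
def fv (v : G.V) : LFree K G := FreeAlgebra.ι K (Sum.inl v)
/-- Edge generator. -/
def fe (e : G.E) : LFree K G := FreeAlgebra.ι K (Sum.inr (Sum.inl e))
/-- Ghost edge generator. -/
def fg (e : G.E) : LFree K G := FreeAlgebra.ι K (Sum.inr (Sum.inr e))

/-- The defining relations of the Leavitt path algebra: the path algebra relations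
(V), (E) together with (CK1) and (CK2). -/
inductive LRel : LFree K G → LFree K G → Prop
  | vv : ∀ {v w : G.V}, v ≠ w → LRel (fv K G v * fv K G w) 0
  | v_idem : ∀ v : G.V, LRel (fv K G v * fv K G v) (fv K G v)
  | se : ∀ e : G.E, LRel (fv K G (G.s e) * fe K G e) (fe K G e)
  | er : ∀ e : G.E, LRel (fe K G e * fv K G (G.r e)) (fe K G e)
  | rg : ∀ e : G.E, LRel (fv K G (G.r e) * fg K G e) (fg K G e)
  | gs : ∀ e : G.E, LRel (fg K G e * fv K G (G.s e)) (fg K G e)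
  | ck1 : ∀ {e f : G.E}, e ≠ f → LRel (fg K G e * fe K G f) 0
  | ck1e : ∀ e : G.E, LRel (fg K G e * fe K G e) (fv K G (G.r e))
  | ck2 : ∀ (v : G.V) (h : (G.s ⁻¹' {v}).Finite), (G.s ⁻¹' {v}).Nonempty →
      LRel (fv K G v) (∑ e ∈ h.toFinset, fe K G e * fg K G e)

/-- The Leavitt path algebra `L_K(E)` of `G` over `K`. -/
abbrev LPA : Type := RingQuot (LRel K G)

/-- The image of a vertex in `L_K(E)`. -/
def lv (v : G.V) : LPA K G := RingQuot.mkAlgHom K (LRel K G) (fv K G v)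
/-- The image of an edge in `L_K(E)`. -/
def le (e : G.E) : LPA K G := RingQuot.mkAlgHom K (LRel K G) (fe K G e)
/-- The image of a ghost edge in `L_K(E)`. -/
def lg (e : G.E) : LPA K G := RingQuot.mkAlgHom K (LRel K G) (fg K G e)

/-- The element of `L_K(E)` associated to a path `p` (a list of edges). -/
def pProd (p : List G.E) : LPA K G := (p.map (le K G)).prod
/-- The element `q*` of `L_K(E)` associated to a path `q`. -/
def gProd (q : List G.E) : LPA K G := (q.reverse.map (lg K G)).prod

/-- The set of monomials `pq*` of degree `n` in `L_K(E)`. -/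
def MonSet (n : ℤ) : Set (LPA K G) :=
  {x | ∃ (u w : G.V) (p q : List G.E), G.IsPathFrom u p ∧ G.IsPathFrom w q ∧
    G.pathEnd u p = G.pathEnd w q ∧ (p.length : ℤ) - (q.length : ℤ) = n ∧
    x = lv K G u * pProd K G p * gProd K G q}

/-- The degree-`n` homogeneous component of `L_K(E)`: the `K`-linear span of the
monomials `pq*` with `|p| − |q| = n`. -/
def lpaComp (n : ℤ) : Submodule K (LPA K G) := Submodule.span K (MonSet K G n)

/-- A homogeneous element of `L_K(E)`. -/
def LHomog (x : LPA K G) : Prop := ∃ n : ℤ, x ∈ lpaComp K G n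

/-- The free `K`-module on the set of pairs `(p, q)`; the module `N_c = M(X)` is
the span of the basis elements indexed by `X`. -/
abbrev MFree : Type := (List G.E × List G.E) →₀ K

/-- The action of a vertex `w` on a basis element `pq*`:
`w · pq* = pq*` if `s(p) = w`, else `0`. -/
def vAct (v w : G.V) (x : List G.E × List G.E) : MFree K G :=
  if G.startVtx v x = w then Finsupp.single x 1 else 0

/-- The action of an edge `f` on a basis element `pq*`:
`f · pq* = red(f p q*)` if `s(p) = r(f)`, else `0`. -/
def eAct (v : G.V) (f : G.E) (x : List G.E × List G.E) : MFree K G :=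
  if G.startVtx v x = G.r f then Finsupp.single (G.red (f :: x.1) x.2) 1 else 0

/-- The action of a ghost edge `f*` on a basis element `pq*`:
`f* · pq* = σ_f⁻¹(pq*)` if `pq* ∈ X_f`, else `0`. -/
def gAct (v : G.V) (cl : List G.E) (f : G.E) (x : List G.E × List G.E) : MFree K G :=
  match x with
  | (e :: t, q) => if e = f then Finsupp.single (t, q) 1 else 0
  | ([], q) => if f ∈ cl ∧ G.s f = G.pathEnd v q then Finsupp.single ([], q ++ [f]) 1
      else 0

/-- Linear extension of an action on basis elements to the whole module. -/
def actM (F : List G.E × List G.E → MFree K G) (m : MFree K G) : MFree K G :=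
  m.sum fun x k => k • F x

/-- The action of `p* = eₙ* ⋯ e₁*` for a path `p = e₁ ⋯ eₙ`, applying `e₁*` first:
`(ep)* · x = p* · (e* · x)`. -/
def gPathAct (v : G.V) (cl : List G.E) : List G.E → MFree K G → MFree K G
  | [], m => m
  | e :: t, m => gPathAct v cl t (actM K G (gAct K G v cl e) m)

/-- The module `N_c^v = M(X)`: the `K`-span of the basis elements indexed by `X`. -/
def spanX (cv : G.V) (cl : List G.E) (v : G.V) : Submodule K (MFree K G) :=
  Submodule.span K
    {m : MFree K G | ∃ x ∈ G.Xset cv cl v, m = Finsupp.single x (1 : K)}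

/-- The degree-`n` homogeneous component of `N_c^v`. -/
def degComp (cv : G.V) (cl : List G.E) (v : G.V) (n : ℤ) : Submodule K (MFree K G) :=
  Submodule.span K
    {m : MFree K G | ∃ x ∈ G.Xset cv cl v, G.degOf x = n ∧ m = Finsupp.single x (1 : K)}

-- ===== Part 1: list/path/red basics =====

lemma pathEnd_nil (u : G.V) : G.pathEnd u [] = u := by simp [DiGraph.pathEnd]

lemma pathEnd_cons (u : G.V) (e : G.E) (t : List G.E) :
    G.pathEnd u (e :: t) = G.pathEnd (G.r e) t := by simp [DiGraph.pathEnd]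

lemma pathEnd_append (u : G.V) (A B : List G.E) :
    G.pathEnd u (A ++ B) = G.pathEnd (G.pathEnd u A) B := by
  induction A generalizing u with
  | nil => simp [pathEnd_nil]
  | cons e t ih => simp [pathEnd_cons, ih]

lemma isPathFrom_nil (u : G.V) : G.IsPathFrom u [] := by simp [DiGraph.IsPathFrom]

lemma isPathFrom_cons {u : G.V} {e : G.E} {t : List G.E} :
    G.IsPathFrom u (e :: t) ↔ G.s e = u ∧ G.IsPathFrom (G.r e) t := by simp [DiGraph.IsPathFrom]

lemma isPathFrom_append {u : G.V} {A B : List G.E} :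
    G.IsPathFrom u (A ++ B) ↔ G.IsPathFrom u A ∧ G.IsPathFrom (G.pathEnd u A) B := by
  induction A generalizing u with
  | nil => simp [DiGraph.IsPathFrom, pathEnd_nil]
  | cons e t ih => simp [isPathFrom_cons, pathEnd_cons, ih, and_assoc]

-- red lemmas
lemma redAux_nil_left (b : List G.E) : G.redAux [] b = ([], b) := by
  cases b <;> rfl

lemma redAux_nil_right (a : List G.E) : G.redAux a [] = (a, []) := by
  cases a <;> rfl

lemma redAux_cons (x y : G.E) (xs ys : List G.E) :
    G.redAux (x :: xs) (y :: ys) =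
      if x = y then G.redAux xs ys else (x :: xs, y :: ys) := rfl

lemma redAux_fst_length (a b : List G.E) :
    (G.redAux a b).1.length ≤ a.length := by
  induction a generalizing b with
  | nil => simp [redAux_nil_left]
  | cons x xs ih =>
    cases b with
    | nil => simp [redAux_nil_right]
    | cons y ys =>
      rw [redAux_cons]
      split
      · exact le_trans (ih ys) (by simp)
      · simp

lemma redAux_eq_self_iff (a b : List G.E) :
    G.redAux a b = (a, b) ↔ a = [] ∨ b = [] ∨ a.head? ≠ b.head? := by
  cases a with
  | nil => simp [redAux_nil_left]
  | cons x xs =>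
    cases b with
    | nil => simp [redAux_nil_right]
    | cons y ys =>
      rw [redAux_cons]
      by_cases h : x = y
      · subst h
        simp only [if_pos rfl]
        constructor
        · intro heq
          have := congrArg (fun p => p.1.length) heq
          have hle := redAux_fst_length G xs ys
          simp at this; omega
        · rintro (h | h | h) <;> simp_all
      · simp [if_neg h, h]

lemma red_nil_left (q : List G.E) : G.red [] q = ([], q) := by
  simp [DiGraph.red, redAux_nil_left]

lemma red_nil_right (p : List G.E) : G.red p [] = (p, []) := by
  simp [DiGraph.red, redAux_nil_right]

lemma red_snoc (p q : List G.E) (e : G.E) :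
    G.red (p ++ [e]) (q ++ [e]) = G.red p q := by
  simp [DiGraph.red, redAux_cons]

lemma red_eq_self_iff (p q : List G.E) :
    G.red p q = (p, q) ↔ p = [] ∨ q = [] ∨ p.getLast? ≠ q.getLast? := by
  have H := redAux_eq_self_iff G p.reverse q.reverse
  simp only [List.head?_reverse, List.reverse_eq_nil_iff] at H
  rw [← H]
  constructor
  · intro h
    unfold DiGraph.red at h
    have h1 := congrArg Prod.fst h
    have h2 := congrArg Prod.snd h
    simp only at h1 h2
    have h1' := congrArg List.reverse h1
    have h2' := congrArg List.reverse h2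
    simp at h1' h2'
    rw [Prod.ext_iff]; exact ⟨h1', h2'⟩
  · intro h
    unfold DiGraph.red
    rw [h]
    simp
-- ===== Part 2: cycle combinatorics =====

lemma pathEnd_concat (u : G.V) (A : List G.E) (e : G.E) :
    G.pathEnd u (A ++ [e]) = G.r e := by
  simp [pathEnd_append, pathEnd_cons, pathEnd_nil]

lemma mem_pathVerts_iff {w u : G.V} {A : List G.E} :
    u ∈ G.pathVerts w A ↔ u = w ∨ ∃ e ∈ A, G.r e = u := by
  simp [DiGraph.pathVerts]

lemma range_mem_pathVerts {w : G.V} {A : List G.E} {e : G.E} (he : e ∈ A) :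
    G.r e ∈ G.pathVerts w A :=
  (mem_pathVerts_iff G).2 (Or.inr ⟨e, he, rfl⟩)

lemma base_mem_pathVerts (w : G.V) (A : List G.E) : w ∈ G.pathVerts w A :=
  (mem_pathVerts_iff G).2 (Or.inl rfl)

lemma pathVerts_eq_ranges {w : G.V} {A : List G.E} (hne : A ≠ [])
    (hend : G.pathEnd w A = w) :
    G.pathVerts w A = {x | ∃ e ∈ A, G.r e = x} := by
  ext u
  rw [mem_pathVerts_iff]
  constructor
  · rintro (rfl | h)
    · rcases List.eq_nil_or_concat A with rfl | ⟨B, e, rfl⟩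
      · exact absurd rfl hne
      · rw [List.concat_eq_append, pathEnd_concat] at hend
        exact ⟨e, by simp, hend⟩
    · exact h
  · exact Or.inr

lemma src_mem_pathVerts {w : G.V} {A : List G.E} (hpath : G.IsPathFrom w A)
    {e : G.E} (he : e ∈ A) : G.s e ∈ G.pathVerts w A := by
  obtain ⟨s₁, s₂, rfl⟩ := List.append_of_mem he
  have h2 := ((isPathFrom_append G).1 hpath).2
  rw [isPathFrom_cons] at h2
  rcases List.eq_nil_or_concat s₁ with rfl | ⟨B, f, rfl⟩
  · rw [h2.1]
    exact (mem_pathVerts_iff G).2 (Or.inl (by simp [pathEnd_nil]))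
  · rw [List.concat_eq_append] at *
    rw [h2.1, pathEnd_concat]
    exact range_mem_pathVerts G (by simp)

lemma exists_src {w : G.V} {A : List G.E} (hpath : G.IsPathFrom w A)
    (hend : G.pathEnd w A = w) (hne : A ≠ []) {u : G.V}
    (hu : u ∈ G.pathVerts w A) : ∃ e ∈ A, G.s e = u := by
  have key : ∀ x, x = w → ∃ e ∈ A, G.s e = x := by
    rintro x rfl
    cases A with
    | nil => exact absurd rfl hne
    | cons e t => exact ⟨e, by simp, ((isPathFrom_cons G).1 hpath).1⟩
  rcases (mem_pathVerts_iff G).1 hu with rfl | ⟨e, he, rfl⟩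
  · exact key _ rfl
  · obtain ⟨s₁, s₂, rfl⟩ := List.append_of_mem he
    cases s₂ with
    | nil =>
      apply key
      rw [← hend]; rw [pathEnd_append, pathEnd_cons, pathEnd_nil]
    | cons e' t' =>
      have h2 := ((isPathFrom_append G).1 hpath).2
      rw [isPathFrom_cons] at h2
      have h3 := (isPathFrom_cons G).1 h2.2
      exact ⟨e', by simp, h3.1⟩

lemma cycle_rotate {cv : G.V} {A B : List G.E} (h : G.IsCycle cv (A ++ B)) :
    G.IsCycle (G.pathEnd cv A) (B ++ A) := by
  obtain ⟨hne, hpath, hend, hnd⟩ := h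
  have h1 := (isPathFrom_append G).1 hpath
  have hBend : G.pathEnd (G.pathEnd cv A) B = cv := by
    rw [← pathEnd_append, hend]
  refine ⟨?_, ?_, ?_, ?_⟩
  · intro h0; apply hne; rcases List.append_eq_nil_iff.1 h0 with ⟨h1', h2'⟩; simp [h1', h2']
  · rw [isPathFrom_append]
    exact ⟨h1.2, by rw [hBend]; exact h1.1⟩
  · rw [pathEnd_append, hBend]
  · rw [List.map_append] at hnd ⊢
    exact List.nodup_append_comm.1 hnd

lemma exists_split_at {w u : G.V} {A : List G.E} (hu : u ∈ G.pathVerts w A) :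
    ∃ A₁ A₂, A = A₁ ++ A₂ ∧ G.pathEnd w A₁ = u := by
  rcases (mem_pathVerts_iff G).1 hu with rfl | ⟨e, he, rfl⟩
  · exact ⟨[], A, rfl, pathEnd_nil G _⟩
  · obtain ⟨s₁, s₂, rfl⟩ := List.append_of_mem he
    exact ⟨s₁ ++ [e], s₂, by simp, pathEnd_concat G w s₁ e⟩

lemma exists_rho {cv : G.V} {cl : List G.E} (hcy : G.IsCycle cv cl)
    {u w : G.V} (hu : u ∈ G.pathVerts cv cl) (hw : w ∈ G.pathVerts cv cl)
    (hne : w ≠ u) :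
    ∃ ρ : List G.E, G.IsPathFrom w ρ ∧ G.pathEnd w ρ = u ∧
      (ρ.map G.s).Nodup ∧ u ∉ ρ.map G.s ∧ (∀ e ∈ ρ, e ∈ cl) ∧
      (∀ x ∈ ρ.map G.s, x ∈ G.pathVerts cv cl) := by
  obtain ⟨A₁, A₂, rfl, hA⟩ := exists_split_at G hu
  have hcyU : G.IsCycle u (A₂ ++ A₁) := by rw [← hA]; exact cycle_rotate G hcy
  obtain ⟨hcne, hcpath, hcend, hcnd⟩ := hcyU
  have hedge : ∀ e : G.E, e ∈ A₂ ++ A₁ ↔ e ∈ A₁ ++ A₂ := by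
    intro e; simp only [List.mem_append]; tauto
  have hvertseq : G.pathVerts cv (A₁ ++ A₂) = G.pathVerts u (A₂ ++ A₁) := by
    rw [pathVerts_eq_ranges G hcy.1 hcy.2.2.1, pathVerts_eq_ranges G hcne hcend]
    ext x
    constructor
    · rintro ⟨e, he, rfl⟩; exact ⟨e, (hedge e).2 he, rfl⟩
    · rintro ⟨e, he, rfl⟩; exact ⟨e, (hedge e).1 he, rfl⟩
  have hw' : w ∈ G.pathVerts u (A₂ ++ A₁) := hvertseq ▸ hw
  obtain ⟨C, D, hCD, hC⟩ := exists_split_at G hw'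
  have hCne : C ≠ [] := by rintro rfl; rw [pathEnd_nil] at hC; exact hne hC.symm
  rw [hCD] at hcpath hcend hcnd
  have h1 := (isPathFrom_append G).1 hcpath
  have hDmem : ∀ e ∈ D, e ∈ A₂ ++ A₁ := fun e he => by rw [hCD]; simp [he]
  refine ⟨D, by rw [← hC]; exact h1.2, by rw [← hC, ← pathEnd_append]; exact hcend,
    ?_, ?_, fun e he => (hedge e).1 (hDmem e he), ?_⟩
  · rw [List.map_append] at hcnd; exact hcnd.of_append_right
  · rw [List.map_append, List.nodup_append] at hcnd
    have huC : u ∈ C.map G.s := by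
      cases C with
      | nil => exact absurd rfl hCne
      | cons c t =>
        have hsc := ((isPathFrom_cons G).1 hcpath).1
        exact List.mem_map.2 ⟨c, by simp, hsc⟩
    exact fun hD => hcnd.2.2 u huC u hD rfl
  · rintro x hx
    simp only [List.mem_map] at hx
    obtain ⟨e, he, rfl⟩ := hx
    exact src_mem_pathVerts G hcy.2.1 ((hedge e).1 (hDmem e he))
-- ===== Part 3: rigidity =====

lemma map_src_eq (u : G.V) (q : List G.E) (hq : G.IsPathFrom u q) :
    q.map G.s = (List.range q.length).map (fun i => G.pathEnd u (q.take i)) := by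
  induction q generalizing u with
  | nil => simp
  | cons e t ih =>
    obtain ⟨hse, ht⟩ := (isPathFrom_cons G).1 hq
    rw [List.map_cons, ih (G.r e) ht, List.length_cons, List.range_succ_eq_map,
      List.map_cons, List.map_map]
    congr 1
    · simp [pathEnd_nil, hse]
    · apply List.map_congr_left
      intro i _
      simp [List.take_succ_cons, pathEnd_cons]

lemma head_mem_cl {cv : G.V} {cl : List G.E} (hc : G.ExclusiveCycle cv cl) :
    ∀ (n : ℕ) (u : G.V) (e : G.E) (t : List G.E), (e :: t).length = n →
      u ∈ G.pathVerts cv cl → G.IsPathFrom u (e :: t) →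
      G.pathEnd u (e :: t) ∈ G.pathVerts cv cl → e ∈ cl := by
  intro n
  induction n using Nat.strong_induction_on with
  | _ n IH =>
  intro u e t hlen hu hpath hend
  subst hlen
  by_cases hI : ∃ i, 1 ≤ i ∧ i < (e :: t).length ∧
      G.pathEnd u ((e :: t).take i) ∈ G.pathVerts cv cl
  · obtain ⟨i, hi1, hi2, hiv⟩ := hI
    obtain ⟨j, rfl⟩ : ∃ j, i = j + 1 := ⟨i - 1, by omega⟩
    rw [List.take_succ_cons] at hiv
    have hpath' : G.IsPathFrom u (e :: t.take j) := by
      rw [← List.take_append_drop (j+1) (e :: t)] at hpath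
      exact ((isPathFrom_append G).1 hpath).1
    exact IH (e :: t.take j).length
      (by simp only [List.length_cons] at hi2; simp [List.length_take]; omega) u e (t.take j) rfl hu hpath' hiv
  · push_neg at hI
    by_cases hJ : ∃ i j, 1 ≤ i ∧ i < j ∧ j < (e :: t).length ∧
        G.pathEnd u ((e :: t).take i) = G.pathEnd u ((e :: t).take j)
    · obtain ⟨i, j, h1, h2, h3, heq⟩ := hJ
      have hpathi : G.IsPathFrom u ((e :: t).take i) := by
        rw [← List.take_append_drop i (e :: t)] at hpath
        exact ((isPathFrom_append G).1 hpath).1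
      have hpathdj : G.IsPathFrom (G.pathEnd u ((e :: t).take j)) ((e :: t).drop j) := by
        rw [← List.take_append_drop j (e :: t)] at hpath
        have := ((isPathFrom_append G).1 hpath).2
        simpa using this
      have hpath' : G.IsPathFrom u ((e :: t).take i ++ (e :: t).drop j) :=
        (isPathFrom_append G).2 ⟨hpathi, heq ▸ hpathdj⟩
      have hend' : G.pathEnd u ((e :: t).take i ++ (e :: t).drop j)
          = G.pathEnd u (e :: t) := by
        rw [pathEnd_append, heq, ← pathEnd_append, List.take_append_drop]
      obtain ⟨i', rfl⟩ : ∃ i', i = i' + 1 := ⟨i - 1, by omega⟩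
      rw [List.take_succ_cons] at hpath' hend'
      exact IH (e :: (t.take i' ++ (e :: t).drop j)).length
        (by simp only [List.length_cons] at h3; simp [List.length_take, List.length_drop]; omega) u e _ rfl hu
        (by simpa using hpath') (hend' ▸ hend)
    · push_neg at hJ
      have hmaps := map_src_eq G u (e :: t) hpath
      have hnd : ((e :: t).map G.s).Nodup := by
        rw [hmaps]
        apply List.Nodup.map_on ?_ List.nodup_range
        intro i hi j hj hfe
        rw [List.mem_range] at hi hj
        by_contra hij
        rcases lt_trichotomy i j with hlt | hteq | hgt
        · rcases Nat.eq_zero_or_pos i with rfl | hpos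
          · apply hI j (by omega) hj
            rw [← hfe]
            simpa [pathEnd_nil] using hu
          · exact hJ i j hpos hlt hj hfe
        · exact hij hteq
        · rcases Nat.eq_zero_or_pos j with rfl | hpos
          · apply hI i (by omega) hi
            rw [hfe]
            simpa [pathEnd_nil] using hu
          · exact hJ j i hpos hgt hi hfe.symm
      by_cases hwu : G.pathEnd u (e :: t) = u
      · have hcyc : G.IsCycle u (e :: t) := ⟨by simp, hpath, hwu, hnd⟩
        exact ((hc.2 u hu (e :: t) hcyc) e).1 (by simp)
      · obtain ⟨ρ, hρpath, hρend, hρnd, hρu, hρcl, hρverts⟩ :=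
          exists_rho G hc.1 hu hend hwu
        have hcyc : G.IsCycle u ((e :: t) ++ ρ) := by
          refine ⟨by simp, ?_, ?_, ?_⟩
          · exact (isPathFrom_append G).2 ⟨hpath, hρpath⟩
          · rw [pathEnd_append, hρend]
          · rw [List.map_append, List.nodup_append]
            refine ⟨hnd, hρnd, ?_⟩
            intro x hx
            rw [hmaps, List.mem_map] at hx
            obtain ⟨i, hi, rfl⟩ := hx
            rw [List.mem_range] at hi
            rcases Nat.eq_zero_or_pos i with rfl | hpos
            · intro b hb hEq
              subst hEq
              exact hρu (by simpa [pathEnd_nil] using hb)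
            · intro b hmem hEq
              subst hEq
              exact hI i hpos hi (hρverts _ hmem)
        exact ((hc.2 u hu _ hcyc) e).1 (by simp)

lemma all_mem_cl {cv : G.V} {cl : List G.E} (hc : G.ExclusiveCycle cv cl) :
    ∀ (q : List G.E) (u : G.V), u ∈ G.pathVerts cv cl → G.IsPathFrom u q →
      G.pathEnd u q ∈ G.pathVerts cv cl → ∀ e ∈ q, e ∈ cl := by
  intro q
  induction q with
  | nil => intro u _ _ _ e he; simp at he
  | cons f t ih =>
    intro u hu hpath hend e he
    have hf : f ∈ cl := head_mem_cl G hc _ u f t rfl hu hpath hend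
    rcases List.mem_cons.1 he with rfl | he'
    · exact hf
    · have ht := ((isPathFrom_cons G).1 hpath).2
      exact ih (G.r f) (range_mem_pathVerts G hf) ht
        (pathEnd_cons G u f t ▸ hend) e he'

lemma walk_unique {cv : G.V} {cl : List G.E} (hc : G.ExclusiveCycle cv cl) :
    ∀ (q₁ q₂ : List G.E) (u : G.V), u ∈ G.pathVerts cv cl →
      G.IsPathFrom u q₁ → G.IsPathFrom u q₂ →
      G.pathEnd u q₁ ∈ G.pathVerts cv cl → G.pathEnd u q₂ ∈ G.pathVerts cv cl →
      q₁.length = q₂.length → q₁ = q₂ := by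
  intro q₁
  induction q₁ with
  | nil =>
    intro q₂ u _ _ _ _ _ hlen
    exact (List.eq_nil_of_length_eq_zero hlen.symm).symm
  | cons e t ih =>
    intro q₂ u hu h1 h2 he1 he2 hlen
    cases q₂ with
    | nil => simp at hlen
    | cons f t₂ =>
      have hecl : e ∈ cl := head_mem_cl G hc _ u e t rfl hu h1 he1
      have hfcl : f ∈ cl := head_mem_cl G hc _ u f t₂ rfl hu h2 he2
      have hse : G.s e = u := ((isPathFrom_cons G).1 h1).1
      have hsf : G.s f = u := ((isPathFrom_cons G).1 h2).1
      have hef : e = f :=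
        List.inj_on_of_nodup_map hc.1.2.2.2 hecl hfcl (by rw [hse, hsf])
      subst hef
      have := ih t₂ (G.r e) (range_mem_pathVerts G hecl)
        ((isPathFrom_cons G).1 h1).2 ((isPathFrom_cons G).1 h2).2
        (pathEnd_cons G u e t ▸ he1) (pathEnd_cons G u e t₂ ▸ he2)
        (by simpa using hlen)
      rw [this]
-- ===== Part 4: the canonical cycle walk =====

def sigE (d : G.E) (cl : List G.E) (u : G.V) : G.E :=
  if h : ∃ e ∈ cl, G.s e = u then h.choose else d

lemma sigE_spec (d : G.E) {cl : List G.E} {u : G.V} (h : ∃ e ∈ cl, G.s e = u) :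
    sigE G d cl u ∈ cl ∧ G.s (sigE G d cl u) = u := by
  rw [sigE, dif_pos h]
  exact ⟨h.choose_spec.1, h.choose_spec.2⟩

def cwF (d : G.E) (cl : List G.E) (v : G.V) : ℕ → List G.E
  | 0 => []
  | k+1 => cwF d cl v k ++ [sigE G d cl (G.pathEnd v (cwF d cl v k))]

section CW

variable {cv : G.V} {cl : List G.E} (hc : G.ExclusiveCycle cv cl)
  {v : G.V} (hv : v ∈ G.pathVerts cv cl) (d : G.E)

include hc in
lemma verts_src {u : G.V} (hu : u ∈ G.pathVerts cv cl) : ∃ e ∈ cl, G.s e = u :=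
  exists_src G hc.1.2.1 hc.1.2.2.1 hc.1.1 hu

include hc hv in
lemma cwF_spec : ∀ k : ℕ, (cwF G d cl v k).length = k ∧
    G.IsPathFrom v (cwF G d cl v k) ∧
    G.pathEnd v (cwF G d cl v k) ∈ G.pathVerts cv cl := by
  intro k
  induction k with
  | zero => exact ⟨rfl, by simp [DiGraph.IsPathFrom, cwF], by rw [cwF, pathEnd_nil]; exact hv⟩
  | succ k ih =>
    obtain ⟨hlen, hpath, hend⟩ := ih
    have hsig := sigE_spec G d (verts_src G hc hend)
    refine ⟨by simp [cwF, hlen], ?_, ?_⟩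
    · rw [cwF, isPathFrom_append]
      exact ⟨hpath, by rw [isPathFrom_cons]; exact ⟨hsig.2, by simp [DiGraph.IsPathFrom]⟩⟩
    · rw [cwF, pathEnd_concat]
      exact range_mem_pathVerts G hsig.1

include hc hv in
lemma cwF_succ (k : ℕ) :
    ∃ e, cwF G d cl v (k+1) = cwF G d cl v k ++ [e] ∧ e ∈ cl ∧
      G.s e = G.pathEnd v (cwF G d cl v k) := by
  have hsig := sigE_spec G d (verts_src G hc (cwF_spec G hc hv d k).2.2)
  exact ⟨_, by rw [cwF], hsig.1, hsig.2⟩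

include hc hv in
/-- Rigidity: every path from `v` ending on the cycle is the canonical walk. -/
lemma walk_eq_cwF {q : List G.E} (hq : G.IsPathFrom v q)
    (hend : G.pathEnd v q ∈ G.pathVerts cv cl) : q = cwF G d cl v q.length := by
  obtain ⟨hlen, hpath, hend'⟩ := cwF_spec G hc hv d q.length
  exact walk_unique G hc q _ v hv hq hpath hend hend' hlen.symm

end CW
-- ===== Part 5: module actions =====

lemma actM_zero (F : List G.E × List G.E → MFree K G) : actM K G F 0 = 0 :=
  Finsupp.sum_zero_index

lemma actM_single (F : List G.E × List G.E → MFree K G) (x : List G.E × List G.E)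
    (c : K) : actM K G F (Finsupp.single x c) = c • F x :=
  Finsupp.sum_single_index (by simp)

lemma actM_add (F : List G.E × List G.E → MFree K G) (a b : MFree K G) :
    actM K G F (a + b) = actM K G F a + actM K G F b :=
  Finsupp.sum_add_index (by simp) (by intros; rw [add_smul])

lemma actM_smul (F : List G.E × List G.E → MFree K G) (c : K) (m : MFree K G) :
    actM K G F (c • m) = c • actM K G F m := by
  rw [actM, actM, Finsupp.sum_smul_index (fun i => zero_smul K (F i)), Finsupp.smul_sum]
  exact Finsupp.sum_congr (fun x _ => by rw [mul_smul])

section Act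

variable (v : G.V) (cl : List G.E)

lemma gPathAct_nil (m : MFree K G) : gPathAct K G v cl [] m = m := rfl

lemma gPathAct_cons (e : G.E) (L : List G.E) (m : MFree K G) :
    gPathAct K G v cl (e :: L) m = gPathAct K G v cl L (actM K G (gAct K G v cl e) m) := rfl

lemma gPathAct_zero (L : List G.E) : gPathAct K G v cl L 0 = 0 := by
  induction L with
  | nil => rfl
  | cons e t ih => rw [gPathAct_cons, actM_zero, ih]

lemma gPathAct_add (L : List G.E) (a b : MFree K G) :
    gPathAct K G v cl L (a + b) = gPathAct K G v cl L a + gPathAct K G v cl L b := by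
  induction L generalizing a b with
  | nil => rfl
  | cons e t ih => rw [gPathAct_cons, actM_add, ih]; rfl

lemma gPathAct_smul (L : List G.E) (c : K) (m : MFree K G) :
    gPathAct K G v cl L (c • m) = c • gPathAct K G v cl L m := by
  induction L generalizing m with
  | nil => rfl
  | cons e t ih => rw [gPathAct_cons, actM_smul, ih]; rfl

lemma gPathAct_append (A B : List G.E) (m : MFree K G) :
    gPathAct K G v cl (A ++ B) m = gPathAct K G v cl B (gPathAct K G v cl A m) := by
  induction A generalizing m with
  | nil => rfl
  | cons e t ih => rw [List.cons_append, gPathAct_cons, ih]; rfl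

lemma gPathAct_sum {ι : Type*} (s : Finset ι) (g : ι → MFree K G) (L : List G.E) :
    gPathAct K G v cl L (s.sum g) = s.sum (fun i => gPathAct K G v cl L (g i)) := by
  classical
  induction s using Finset.induction_on with
  | empty => simp [gPathAct_zero]
  | insert _ _ hni ih =>
    rw [Finset.sum_insert hni, Finset.sum_insert hni, gPathAct_add, ih]

lemma gPathAct_mem {P : Submodule K (MFree K G)}
    (hgact : ∀ (f : G.E), ∀ m ∈ P, actM K G (gAct K G v cl f) m ∈ P)
    (L : List G.E) {m : MFree K G} (hm : m ∈ P) : gPathAct K G v cl L m ∈ P := by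
  induction L generalizing m with
  | nil => exact hm
  | cons e t ih => exact ih (hgact e m hm)

lemma gAct_cons (f e : G.E) (t q : List G.E) :
    gAct K G v cl f (e :: t, q) =
      if e = f then Finsupp.single (t, q) 1 else 0 := rfl

lemma gAct_nilp (f : G.E) (q : List G.E) :
    gAct K G v cl f ([], q) =
      if f ∈ cl ∧ G.s f = G.pathEnd v q then Finsupp.single ([], q ++ [f]) 1
      else 0 := rfl

lemma startVtx_nilp (q : List G.E) :
    G.startVtx v ([], q) = G.pathEnd v q := rfl

lemma startVtx_cons (e : G.E) (t q : List G.E) :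
    G.startVtx v (e :: t, q) = G.s e := rfl

end Act

section Main

variable {cv : G.V} {cl : List G.E} (hc : G.ExclusiveCycle cv cl)
  {v : G.V} (hv : v ∈ G.pathVerts cv cl)

/-- Tail of an `X`-element is in `X`. -/
lemma Xset_tail {e : G.E} {t q : List G.E} (hy : (e :: t, q) ∈ G.Xset cv cl v) :
    (t, q) ∈ G.Xset cv cl v := by
  obtain ⟨⟨h1, h2, h3, h4⟩, hred⟩ := hy
  rw [startVtx_cons] at h1 h3
  rw [isPathFrom_cons] at h1
  constructor
  · refine ⟨?_, h2, ?_, h4⟩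
    · cases t with
      | nil => simp [DiGraph.IsPathFrom]
      | cons e' t' =>
        rw [startVtx_cons, isPathFrom_cons]
        exact ⟨rfl, ((isPathFrom_cons G).1 h1.2).2⟩
    · cases t with
      | nil =>
        rw [startVtx_nilp, pathEnd_nil]
      | cons e' t' =>
        rw [startVtx_cons, ← h3]
        rw [pathEnd_cons, pathEnd_cons, pathEnd_cons]
  · rw [red_eq_self_iff]
    have := (red_eq_self_iff G (e :: t) q).1 hred
    rcases this with h | h | h
    · simp at h
    · exact Or.inr (Or.inl h)
    · cases t with
      | nil => exact Or.inl rfl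
      | cons e' t' =>
        refine Or.inr (Or.inr ?_)
        rwa [List.getLast?_cons_cons] at h

/-- One ghost-edge step on a basis element of `X`. -/
lemma gStep {y : List G.E × List G.E} (hy : y ∈ G.Xset cv cl v) (f : G.E) :
    actM K G (gAct K G v cl f) (Finsupp.single y 1) = 0 ∨
    ∃ z ∈ G.Xset cv cl v,
      actM K G (gAct K G v cl f) (Finsupp.single y 1) = Finsupp.single z 1 ∧
      G.degOf z = G.degOf y - 1 ∧
      (z.1.length + 1 = y.1.length ∨ (y.1 = [] ∧ z.1 = [])) := by
  obtain ⟨p₁, q₁⟩ := y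
  rw [actM_single, one_smul]
  cases p₁ with
  | nil =>
    rw [gAct_nilp]
    split_ifs with h
    · right
      refine ⟨([], q₁ ++ [f]), ?_, rfl, ?_, Or.inr ⟨rfl, rfl⟩⟩
      · obtain ⟨⟨h1, h2, h3, h4⟩, hred⟩ := hy
        refine ⟨⟨by simp [DiGraph.IsPathFrom], ?_, ?_, ?_⟩, ?_⟩
        · rw [isPathFrom_append]
          refine ⟨h2, ?_⟩
          rw [isPathFrom_cons]
          exact ⟨h.2, by simp [DiGraph.IsPathFrom]⟩
        · show G.pathEnd (G.startVtx v ([], q₁ ++ [f])) [] = G.pathEnd v (q₁ ++ [f])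
          rw [startVtx_nilp, pathEnd_nil]
        · show G.pathEnd v (q₁ ++ [f]) ∈ G.pathVerts cv cl
          rw [pathEnd_concat]
          exact range_mem_pathVerts G h.1
        · exact (red_eq_self_iff G _ _).2 (Or.inl rfl)
      · simp [DiGraph.degOf]
        ring
    · exact Or.inl rfl
  | cons e t =>
    rw [gAct_cons]
    split_ifs with h
    · subst h
      right
      refine ⟨(t, q₁), Xset_tail G hy, rfl, ?_, Or.inl (by simp)⟩
      simp [DiGraph.degOf]
      ring
    · exact Or.inl rfl

lemma gAct_eq_single {y z : List G.E × List G.E} (hy : y ∈ G.Xset cv cl v) {f : G.E}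
    (h : gAct K G v cl f y = Finsupp.single z 1) :
    (y.1 = f :: z.1 ∧ y.2 = z.2) ∨ (y.1 = [] ∧ z.1 = [] ∧ z.2 = y.2 ++ [f]) := by
  obtain ⟨p₁, q₁⟩ := y
  cases p₁ with
  | nil =>
    rw [gAct_nilp] at h
    split_ifs at h with hcond
    · have := Finsupp.single_left_injective (one_ne_zero (α := K)) h
      right
      exact ⟨rfl, congrArg Prod.fst this.symm, congrArg Prod.snd this.symm⟩
    · exact absurd (Finsupp.single_eq_zero.1 h.symm) one_ne_zero
  | cons e t =>
    rw [gAct_cons] at h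
    split_ifs at h with hcond
    · subst hcond
      have := Finsupp.single_left_injective (one_ne_zero (α := K)) h
      left
      exact ⟨by rw [← this], by rw [← this]⟩
    · exact absurd (Finsupp.single_eq_zero.1 h.symm) one_ne_zero

lemma gStep_inj {y₁ y₂ z : List G.E × List G.E} (h1 : y₁ ∈ G.Xset cv cl v)
    (h2 : y₂ ∈ G.Xset cv cl v) {f : G.E}
    (e1 : actM K G (gAct K G v cl f) (Finsupp.single y₁ 1) = Finsupp.single z 1)
    (e2 : actM K G (gAct K G v cl f) (Finsupp.single y₂ 1) = Finsupp.single z 1) :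
    y₁ = y₂ := by
  rw [actM_single, one_smul] at e1 e2
  have c1 := gAct_eq_single K G h1 e1
  have c2 := gAct_eq_single K G h2 e2
  have key : ∀ (a b : List G.E × List G.E), a ∈ G.Xset cv cl v →
      (a.1 = f :: z.1 ∧ a.2 = z.2) → (b.1 = [] ∧ z.1 = [] ∧ z.2 = b.2 ++ [f]) → False := by
    rintro a b ha ⟨ha1, ha2⟩ ⟨hb1, hz1, hz2⟩
    rw [hz1] at ha1
    have hared := ha.2
    rw [ha1, ha2, hz2] at hared
    have : G.red [f] (b.2 ++ [f]) = ([], b.2) := by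
      have := red_snoc G [] b.2 f
      rwa [red_nil_left, List.nil_append] at this
    rw [this] at hared
    have hlen := congrArg (fun p => p.1.length) hared
    simp [ha1] at hlen
  rcases c1 with ⟨ha1, ha2⟩ | ⟨ha1, hz1, hz2⟩ <;> rcases c2 with ⟨hb1, hb2⟩ | ⟨hb1, hz1', hz2'⟩
  · exact Prod.ext (by rw [ha1, hb1]) (by rw [ha2, hb2])
  · exact absurd (key y₁ y₂ h1 ⟨ha1, ha2⟩ ⟨hb1, hz1', hz2'⟩) not_false
  · exact absurd (key y₂ y₁ h2 ⟨hb1, hb2⟩ ⟨ha1, hz1, hz2⟩) not_false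
  · refine Prod.ext (by rw [ha1, hb1]) ?_
    have := hz2.symm.trans hz2'
    exact List.append_left_inj [f] |>.1 this.symm |>.symm

/-- Tracing a ghost-path action on a basis element. -/
lemma gTrace : ∀ (L : List G.E) (y : List G.E × List G.E), y ∈ G.Xset cv cl v →
    gPathAct K G v cl L (Finsupp.single y 1) ≠ 0 →
    ∃ z ∈ G.Xset cv cl v,
      gPathAct K G v cl L (Finsupp.single y 1) = Finsupp.single z 1 ∧
      G.degOf z = G.degOf y - L.length ∧
      (z.1.length + L.length ≤ y.1.length ∨ z.1 = []) ∧
      ∀ y' ∈ G.Xset cv cl v,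
        gPathAct K G v cl L (Finsupp.single y' 1) = Finsupp.single z 1 → y' = y := by
  intro L
  induction L with
  | nil =>
    intro y hy _
    refine ⟨y, hy, rfl, by simp, Or.inl (by simp), ?_⟩
    intro y' _ h
    exact Finsupp.single_left_injective (one_ne_zero (α := K)) h
  | cons f L' ih =>
    intro y hy hne
    rw [gPathAct_cons] at hne
    rcases gStep K G hy f with h0 | ⟨w, hw, heq, hdeg, hlen⟩
    · rw [h0, gPathAct_zero] at hne
      exact absurd rfl hne
    · rw [heq] at hne
      obtain ⟨z, hz, hzeq, hzdeg, hzlen, hzuniq⟩ := ih w hw hne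
      refine ⟨z, hz, by rw [gPathAct_cons, heq, hzeq], ?_, ?_, ?_⟩
      · rw [hzdeg, hdeg]
        simp only [List.length_cons]
        push_cast
        ring
      · rcases hlen with hlen | ⟨hy1, hw1⟩
        · rcases hzlen with hzlen | hz1
          · left
            simp only [List.length_cons]
            omega
          · exact Or.inr hz1
        · rcases hzlen with hzlen | hz1
          · right
            rw [hw1] at hzlen
            simp only [List.length_nil, Nat.le_zero] at hzlen
            exact List.length_eq_zero_iff.1 (by omega)
          · exact Or.inr hz1
      · intro y' hy' h'
        rw [gPathAct_cons] at h'
        have hne' : actM K G (gAct K G v cl f) (Finsupp.single y' 1) ≠ 0 := by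
          intro h0
          rw [h0, gPathAct_zero] at h'
          exact absurd (Finsupp.single_eq_zero.1 h'.symm) one_ne_zero
        rcases gStep K G hy' f with h0 | ⟨w', hw', heq', _, _⟩
        · exact absurd h0 hne'
        · rw [heq'] at h'
          have := hzuniq w' hw' h'
          subst this
          exact gStep_inj K G hy' hy heq' heq

end Main
-- ===== Part 6: strip/extend and phase-2 lemmas =====

def extLF (d : G.E) (cl : List G.E) (v : G.V) (k : ℕ) : ℕ → List G.E
  | 0 => []
  | N+1 => extLF d cl v k N ++ [sigE G d cl (G.pathEnd v (cwF G d cl v (k+N)))]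

lemma extLF_length (d : G.E) (cl : List G.E) (v : G.V) (k N : ℕ) :
    (extLF G d cl v k N).length = N := by
  induction N with
  | zero => rfl
  | succ N ih => simp [extLF, ih]

lemma gPathAct_strip (v : G.V) (cl : List G.E) :
    ∀ (p₁ A q₁ : List G.E),
      gPathAct K G v cl (p₁ ++ A) (Finsupp.single (p₁, q₁) 1) =
      gPathAct K G v cl A (Finsupp.single (([] : List G.E), q₁) 1) := by
  intro p₁
  induction p₁ with
  | nil => intro A q₁; rfl
  | cons e t ih =>
    intro A q₁
    rw [List.cons_append, gPathAct_cons, actM_single, one_smul, gAct_cons,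
      if_pos rfl, ih]

section Phase2

variable {cv : G.V} {cl : List G.E} (hc : G.ExclusiveCycle cv cl)
  {v : G.V} (hv : v ∈ G.pathVerts cv cl) (d : G.E)

include hc hv in
lemma gPathAct_ext (k : ℕ) : ∀ N : ℕ,
    gPathAct K G v cl (extLF G d cl v k N)
        (Finsupp.single (([] : List G.E), cwF G d cl v k) 1) =
      Finsupp.single (([] : List G.E), cwF G d cl v (k+N)) 1 := by
  intro N
  induction N with
  | zero => rfl
  | succ N ih =>
    rw [extLF, gPathAct_append, ih]
    have hsig := sigE_spec G d (verts_src G hc (cwF_spec G hc hv d (k+N)).2.2)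
    rw [gPathAct_cons, gPathAct_nil, actM_single, one_smul, gAct_nilp,
      if_pos ⟨hsig.1, hsig.2⟩]
    congr 1

variable {P : Submodule K (MFree K G)}

include hc hv in
lemma downP (heact : ∀ (f : G.E), ∀ m ∈ P, actM K G (eAct K G v f) m ∈ P) (j : ℕ)
    (h : Finsupp.single (([] : List G.E), cwF G d cl v (j+1)) (1:K) ∈ P) :
    Finsupp.single (([] : List G.E), cwF G d cl v j) (1:K) ∈ P := by
  obtain ⟨e, hstep, hecl, hes⟩ := cwF_succ G hc hv d j
  have hsv : G.startVtx v (([] : List G.E), cwF G d cl v (j+1)) = G.r e := by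
    rw [startVtx_nilp, hstep, pathEnd_concat]
  have hcomp : actM K G (eAct K G v e)
      (Finsupp.single (([] : List G.E), cwF G d cl v (j+1)) 1)
      = Finsupp.single (([] : List G.E), cwF G d cl v j) (1:K) := by
    rw [actM_single, one_smul]
    simp only [eAct]
    rw [hsv, if_pos rfl]
    congr 1
    show G.red [e] (cwF G d cl v (j+1)) = ([], cwF G d cl v j)
    rw [hstep]
    have h2 := red_snoc G [] (cwF G d cl v j) e
    rwa [red_nil_left, List.nil_append] at h2
  rw [← hcomp]
  exact heact e _ h

include hc hv in
lemma upP (hgact : ∀ (f : G.E), ∀ m ∈ P, actM K G (gAct K G v cl f) m ∈ P) (j : ℕ)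
    (h : Finsupp.single (([] : List G.E), cwF G d cl v j) (1:K) ∈ P) :
    Finsupp.single (([] : List G.E), cwF G d cl v (j+1)) (1:K) ∈ P := by
  obtain ⟨e, hstep, hecl, hes⟩ := cwF_succ G hc hv d j
  have hcomp : actM K G (gAct K G v cl e)
      (Finsupp.single (([] : List G.E), cwF G d cl v j) 1)
      = Finsupp.single (([] : List G.E), cwF G d cl v (j+1)) (1:K) := by
    rw [actM_single, one_smul, gAct_nilp, if_pos ⟨hecl, hes⟩, hstep]
  rw [← hcomp]
  exact hgact e _ h

lemma buildP (heact : ∀ (f : G.E), ∀ m ∈ P, actM K G (eAct K G v f) m ∈ P) :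
    ∀ (sfx q : List G.E), (sfx, q) ∈ G.Xset cv cl v →
      Finsupp.single (([] : List G.E), q) (1:K) ∈ P →
      Finsupp.single (sfx, q) (1:K) ∈ P := by
  intro sfx
  induction sfx with
  | nil => intro q _ h; exact h
  | cons f t ih =>
    intro q hy hbase
    have hP := ih q (Xset_tail G hy) hbase
    have hsv : G.startVtx v (t, q) = G.r f := by
      obtain ⟨⟨h1, h2, h3, h4⟩, hred⟩ := hy
      rw [startVtx_cons] at h1 h3
      rw [isPathFrom_cons] at h1
      cases t with
      | nil => rw [startVtx_nilp, ← h3, pathEnd_cons, pathEnd_nil]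
      | cons e' t' =>
        rw [startVtx_cons]
        exact ((isPathFrom_cons G).1 h1.2).1
    have hcomp : actM K G (eAct K G v f) (Finsupp.single (t, q) 1)
        = Finsupp.single (f :: t, q) (1:K) := by
      rw [actM_single, one_smul]
      simp only [eAct]
      rw [hsv, if_pos rfl]
      congr 1
      exact hy.2
    rw [← hcomp]
    exact heact f _ hP

end Phase2
/-- `N_c^v` is graded simple: every nonzero graded submodule (a `K`-subspace of
`N_c^v` closed under the action of vertices, edges and ghost edges of `L_K(E)` and
spanned by its homogeneous elements) is all of `N_c^v`. -/
theorem Nc_graded_simple (cv : G.V) (cl : List G.E)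
    (hc : G.ExclusiveCycle cv cl) (v : G.V) (hv : v ∈ G.pathVerts cv cl)
    (P : Submodule K (MFree K G)) (hle : P ≤ spanX K G cv cl v)
    (hvact : ∀ (w : G.V), ∀ m ∈ P, actM K G (vAct K G v w) m ∈ P)
    (heact : ∀ (f : G.E), ∀ m ∈ P, actM K G (eAct K G v f) m ∈ P)
    (hgact : ∀ (f : G.E), ∀ m ∈ P, actM K G (gAct K G v cl f) m ∈ P)
    (hgraded : P = Submodule.span K
      {m : MFree K G | m ∈ P ∧ ∃ n : ℤ, m ∈ degComp K G cv cl v n})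
    (hne : P ≠ ⊥) :
    P = spanX K G cv cl v := by
  classical
  -- a nonzero homogeneous element of P
  have hex : ∃ m, (m ∈ P ∧ ∃ n : ℤ, m ∈ degComp K G cv cl v n) ∧ m ≠ 0 := by
    by_contra hcon
    push_neg at hcon
    apply hne
    rw [hgraded, Submodule.span_eq_bot]
    exact fun x hx => hcon x hx
  obtain ⟨m, ⟨hmP, n, hmdeg⟩, hm0⟩ := hex
  -- its support consists of degree-n elements of X
  have hsupp : ∀ y ∈ m.support, y ∈ G.Xset cv cl v ∧ G.degOf y = n := by
    have hset : {mm : MFree K G | ∃ x ∈ G.Xset cv cl v, G.degOf x = n ∧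
        mm = Finsupp.single x 1}
        = (fun x => Finsupp.single x (1:K)) '' {x | x ∈ G.Xset cv cl v ∧ G.degOf x = n} := by
      ext mm
      constructor
      · rintro ⟨x, hx, hdx, rfl⟩; exact ⟨x, ⟨hx, hdx⟩, rfl⟩
      · rintro ⟨x, ⟨hx, hdx⟩, rfl⟩; exact ⟨x, hx, hdx, rfl⟩
    rw [degComp, hset, ← Finsupp.supported_eq_span_single] at hmdeg
    exact fun y hy => (Finsupp.mem_supported K m).1 hmdeg hy
  obtain ⟨x, hxsupp⟩ := Finsupp.support_nonempty_iff.2 hm0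
  obtain ⟨hxX, hxdeg⟩ := hsupp x hxsupp
  have hclne : cl ≠ [] := hc.1.1
  set d : G.E := cl.head hclne with hd
  have hq : x.2 = cwF G d cl v x.2.length :=
    walk_eq_cwF G hc hv d hxX.1.2.1 hxX.1.2.2.2
  set k := x.2.length with hk
  set N := m.support.sup (fun y => y.1.length) with hN
  have hNle : ∀ y ∈ m.support, y.1.length ≤ N := fun y hy => Finset.le_sup (f := fun y => y.1.length) hy
  set L := x.1 ++ extLF G d cl v k N with hL
  have hLlen : L.length = x.1.length + N := by
    rw [hL, List.length_append, extLF_length]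
  set xinf : List G.E × List G.E := ([], cwF G d cl v (k+N)) with hxinf
  -- the ghost operator maps the chosen basis element to xinf
  have hTx : gPathAct K G v cl L (Finsupp.single x 1) = Finsupp.single xinf 1 := by
    rw [hL]
    have : Finsupp.single x (1:K) = Finsupp.single (x.1, x.2) 1 := rfl
    rw [this, gPathAct_strip, hq]
    exact gPathAct_ext K G hc hv d k N
  -- all other support elements die
  have hTy : ∀ y ∈ m.support, y ≠ x →
      gPathAct K G v cl L (Finsupp.single y 1) = 0 := by
    intro y hy hyx
    by_contra h0
    obtain ⟨hyX, hydeg⟩ := hsupp y hy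
    obtain ⟨z, hzX, hzeq, hzdeg, hzlen, huniq⟩ := gTrace K G L y hyX h0
    have hz1 : z.1 = [] := by
      rcases hzlen with h | h
      · have h2 := hNle y hy
        rw [hLlen] at h
        exact List.length_eq_zero_iff.1 (by omega)
      · exact h
    have hzq : z.2 = cwF G d cl v z.2.length :=
      walk_eq_cwF G hc hv d hzX.1.2.1 hzX.1.2.2.2
    have hzlen2 : z.2.length = k + N := by
      rw [hydeg] at hzdeg
      simp only [DiGraph.degOf] at hzdeg hxdeg
      rw [hz1] at hzdeg
      rw [hLlen] at hzdeg
      simp only [List.length_nil] at hzdeg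
      rw [← hk] at hxdeg
      omega
    have hzx : z = xinf := by
      rw [hxinf, ← hzlen2]
      exact Prod.ext hz1 hzq
    rw [hzx] at huniq
    exact hyx (huniq x hxX hTx).symm
  -- hence P contains the basis element xinf
  have hxinfP : Finsupp.single xinf (1:K) ∈ P := by
    have hTm : gPathAct K G v cl L m = (m x) • Finsupp.single xinf 1 := by
      conv_lhs => rw [← Finsupp.sum_single m, Finsupp.sum]
      rw [gPathAct_sum]
      rw [Finset.sum_eq_single_of_mem x hxsupp]
      · have : Finsupp.single x (m x) = (m x) • Finsupp.single x (1:K) := by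
          rw [Finsupp.smul_single, smul_eq_mul, mul_one]
        rw [this, gPathAct_smul, hTx]
      · intro y hy hyx
        have : Finsupp.single y (m y) = (m y) • Finsupp.single y (1:K) := by
          rw [Finsupp.smul_single, smul_eq_mul, mul_one]
        rw [this, gPathAct_smul, hTy y hy hyx, smul_zero]
    have hmem := gPathAct_mem K G v cl hgact L hmP
    rw [hTm] at hmem
    have hmx : m x ≠ 0 := Finsupp.mem_support_iff.1 hxsupp
    have h2 := P.smul_mem (m x)⁻¹ hmem
    rwa [smul_smul, inv_mul_cancel₀ hmx, one_smul] at h2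
  -- P contains every basis element ([], cwF j)
  have hdown : ∀ i, Finsupp.single (([]:List G.E), cwF G d cl v i) (1:K) ∈ P →
      Finsupp.single (([]:List G.E), cwF G d cl v 0) (1:K) ∈ P := by
    intro i
    induction i with
    | zero => exact id
    | succ i ih => exact fun h => ih (downP K G hc hv d heact i h)
  have hup : ∀ j, Finsupp.single (([]:List G.E), cwF G d cl v j) (1:K) ∈ P := by
    intro j
    induction j with
    | zero => exact hdown (k+N) hxinfP
    | succ j ih => exact upP K G hc hv d hgact j ih
  -- P contains every basis element of X
  have hspan : spanX K G cv cl v ≤ P := by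
    rw [spanX, Submodule.span_le]
    rintro mm ⟨y, hyX, rfl⟩
    have hyq : y.2 = cwF G d cl v y.2.length :=
      walk_eq_cwF G hc hv d hyX.1.2.1 hyX.1.2.2.2
    have hbase : Finsupp.single (([]:List G.E), y.2) (1:K) ∈ P := by
      rw [hyq]; exact hup y.2.length
    have := buildP K G heact y.1 y.2 hyX hbase
    exact this
  exact le_antisymm hle hspan

end
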